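/- In a finite tree, the successor relation on the set of pseudoaccesses is a cyclic permutation, i.e., the successor function acts transitively on the set of all pseudoaccesses (equivalently, the set of pseudoaccesses forms a single cycle under the successor map). -/

import Mathlib

/-- A pseudoaccess at a vertex `v` is determined by its first edge, i.e. by a dart
`(v, w)`.  Given a cyclic order on the edges at each vertex, encoded by a permutation
`σ v` of the neighbors of `v` (sending each incident edge to its successor), the
successor of the pseudoaccess `(v, ℓ, ℓ')` (with `ℓ = {v,w}`, `ℓ' = {v, σ v w}`) is
the pseudoaccess at `v' = σ v w` whose first edge is `ℓ'`, i.e. the dart `(σ v w, v)`. -/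
def pseudoaccessSucc {V : Type*} (G : SimpleGraph V)
    (σ : ∀ v : V, Equiv.Perm (G.neighborSet v)) (d : G.Dart) : G.Dart :=
  ⟨((((σ d.fst) ⟨d.snd, d.adj⟩ : G.neighborSet d.fst) : V), d.fst),
    (((σ d.fst) ⟨d.snd, d.adj⟩).2).symm⟩

/-- `sideP G v w x` says that there is a path from `v` to `x` avoiding `w`.
In a tree with `v` adjacent to `w`, this describes the component of `v` in the
forest obtained by removing the edge `{v, w}`. -/
def sideP {V : Type*} (G : SimpleGraph V) (v w x : V) : Prop :=
  ∃ p : G.Walk v x, p.IsPath ∧ w ∉ p.support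

/-- The number of vertices on the `v`-side of the edge `{v, w}`. -/
noncomputable def sideCard {V : Type*} (G : SimpleGraph V) (v w : V) : ℕ :=
  {x | sideP G v w x}.ncard

private lemma tree_path_avoid {V : Type*} [DecidableEq V] {G : SimpleGraph V} (hT : G.IsTree)
    {u v w : V} (huv : G.Adj v u) (hvw : G.Adj v w) (hne : u ≠ w) (x : V)
    (h : sideP G u v x) : sideP G v w x := by
  obtain ⟨p, hp, hv⟩ := h
  have hwp : w ∉ p.support := by
    by_contra hw
    have hr : (p.takeUntil w hw).IsPath := hp.takeUntil hw
    have hvr : v ∉ (p.takeUntil w hw).support :=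
      fun hmem => hv (p.support_takeUntil_subset hw hmem)
    have hs : (SimpleGraph.Walk.cons huv (p.takeUntil w hw)).IsPath := hr.cons hvr
    have hsr := hs.reverse
    have he : (SimpleGraph.Walk.cons hvw.symm SimpleGraph.Walk.nil : G.Walk w v).IsPath := by
      rw [SimpleGraph.Walk.cons_isPath_iff]
      exact ⟨SimpleGraph.Walk.IsPath.nil, by simp [hvw.ne']⟩
    have heq := (hT.existsUnique_path w v).unique hsr he
    have hu1 : u ∈ (SimpleGraph.Walk.cons huv (p.takeUntil w hw)).reverse.support := by
      rw [SimpleGraph.Walk.support_reverse, List.mem_reverse,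
        SimpleGraph.Walk.support_cons]
      exact List.mem_cons_of_mem _ ((p.takeUntil w hw).start_mem_support)
    rw [heq] at hu1
    simp only [SimpleGraph.Walk.support_cons, SimpleGraph.Walk.support_nil,
      List.mem_cons, List.not_mem_nil, or_false] at hu1
    rcases hu1 with h1 | h1
    · exact hne h1
    · exact huv.ne' h1
  refine ⟨SimpleGraph.Walk.cons huv p, hp.cons hv, ?_⟩
  rw [SimpleGraph.Walk.support_cons]
  simp only [List.mem_cons, not_or]
  exact ⟨hvw.ne', hwp⟩

private lemma sideCard_lt {V : Type*} [Fintype V] [DecidableEq V] {G : SimpleGraph V} (hT : G.IsTree)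
    {u v w : V} (huv : G.Adj v u) (hvw : G.Adj v w) (hne : u ≠ w) :
    sideCard G u v < sideCard G v w := by
  apply Set.ncard_lt_ncard _ (Set.toFinite _)
  constructor
  · intro x hx
    exact tree_path_avoid hT huv hvw hne x hx
  · intro hsub
    have hv : v ∈ {x | sideP G v w x} :=
      ⟨SimpleGraph.Walk.nil, SimpleGraph.Walk.IsPath.nil, by simp [hvw.ne']⟩
    obtain ⟨p, _, hnp⟩ := hsub hv
    exact hnp p.end_mem_support

/-- In a finite tree, if the cyclic order of edges at each vertex is a single cycle,
then the successor function on pseudoaccesses is a single cycle: it acts transitively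
on the set of all pseudoaccesses. -/
theorem pseudoaccess_successor_transitive
    {V : Type*} [Fintype V] (G : SimpleGraph V) (hT : G.IsTree)
    (σ : ∀ v : V, Equiv.Perm (G.neighborSet v))
    (hσ : ∀ v : V, ∀ x y : G.neighborSet v, ∃ n : ℕ, (⇑(σ v))^[n] x = y) :
    ∀ d d' : G.Dart, ∃ n : ℕ, (pseudoaccessSucc G σ)^[n] d = d' := by
  classical
  set f := pseudoaccessSucc G σ with hf
  let R : G.Dart → G.Dart → Prop := fun d d' => ∃ n, f^[n] d = d'
  have Rrefl : ∀ d, R d d := fun d => ⟨0, rfl⟩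
  have Rtrans : ∀ {d1 d2 d3 : G.Dart}, R d1 d2 → R d2 d3 → R d1 d3 := by
    rintro d1 d2 d3 ⟨m, hm⟩ ⟨n, hn⟩
    exact ⟨n + m, by rw [Function.iterate_add_apply, hm, hn]⟩
  -- f is injective
  have finj : Function.Injective f := by
    rintro ⟨⟨a, b⟩, hab⟩ ⟨⟨c, e⟩, hce⟩ h
    rw [SimpleGraph.Dart.ext_iff] at h
    simp only [hf, pseudoaccessSucc, Prod.mk.injEq] at h
    obtain ⟨h1, h2⟩ := h
    subst h2
    have h3 : (σ a) ⟨b, hab⟩ = (σ a) ⟨e, hce⟩ := Subtype.coe_injective h1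
    have h4 : b = e := congrArg Subtype.val ((σ a).injective h3)
    subst h4
    rfl
  have fbij : Function.Bijective f := Finite.injective_iff_bijective.mp finj
  let π : Equiv.Perm G.Dart := Equiv.ofBijective f fbij
  have hiter : ∀ (n : ℕ) (d : G.Dart), f^[n] d = (π ^ n) d := by
    intro n d
    rw [← Equiv.Perm.iterate_eq_pow]
    rfl
  have Rsymm : ∀ {d d' : G.Dart}, R d d' → R d' d := by
    rintro d d' ⟨n, hn⟩
    have hpos : 0 < orderOf π := orderOf_pos π
    refine ⟨n * (orderOf π - 1), ?_⟩
    have key : f^[n * (orderOf π - 1) + n] d = d := by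
      have heq : n * (orderOf π - 1) + n = orderOf π * n := by
        have := Nat.sub_add_cancel hpos
        calc n * (orderOf π - 1) + n = n * ((orderOf π - 1) + 1) := by ring
          _ = n * orderOf π := by rw [this]
          _ = orderOf π * n := Nat.mul_comm _ _
      rw [heq, hiter, pow_mul, pow_orderOf_eq_one, one_pow, Equiv.Perm.coe_one, id]
    rw [Function.iterate_add_apply, hn] at key
    exact key
  -- every element of a neighbor permutation is periodic
  have sigfix : ∀ (v : V) (x : G.neighborSet v), ∃ k, 0 < k ∧ (⇑(σ v))^[k] x = x := by
    intro v x
    refine ⟨orderOf (σ v), orderOf_pos _, ?_⟩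
    rw [Equiv.Perm.iterate_eq_pow, pow_orderOf_eq_one]
    rfl
  -- the key lemma: the reverse of a dart is in its orbit
  have rev : ∀ (N : ℕ) (a b : V) (hab : G.Adj a b), sideCard G a b ≤ N →
      R ⟨(a, b), hab⟩ ⟨(b, a), hab.symm⟩ := by
    intro N
    induction N using Nat.strong_induction_on with
    | _ N IH =>
      intro v w hvw hle
      set x0 : G.neighborSet v := ⟨w, hvw⟩ with hx0
      have inner : ∀ k : ℕ,
          (∀ j, 1 ≤ j → j ≤ k → (((⇑(σ v))^[j] x0 : G.neighborSet v) : V) ≠ w) →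
          R ⟨(v, w), hvw⟩
            ⟨((((⇑(σ v))^[k + 1] x0 : G.neighborSet v) : V), v),
              ((⇑(σ v))^[k + 1] x0).2.symm⟩ := by
        intro k
        induction k with
        | zero =>
          intro _
          refine ⟨1, ?_⟩
          apply SimpleGraph.Dart.ext
          have h0 : (σ v) ⟨w, hvw⟩ = (⇑(σ v))^[0 + 1] x0 := by
            rw [zero_add, Function.iterate_one]
          exact congrArg (fun z : G.neighborSet v => ((z : V), v)) h0
        | succ k ih =>
          intro hj
          have hk := ih (fun j h1 h2 => hj j h1 (le_trans h2 (Nat.le_succ k)))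
          have hune : (((⇑(σ v))^[k + 1] x0 : G.neighborSet v) : V) ≠ w :=
            hj (k + 1) (Nat.le_add_left 1 k) le_rfl
          set u : G.neighborSet v := (⇑(σ v))^[k + 1] x0 with hu
          have hadjvu : G.Adj v (u : V) := u.2
          have hlt : sideCard G (u : V) v < sideCard G v w :=
            sideCard_lt hT hadjvu hvw hune
          have hflip := IH (sideCard G (u : V) v) (lt_of_lt_of_le hlt hle)
            (u : V) v hadjvu.symm le_rfl
          have hnext : f ⟨(v, (u : V)), hadjvu⟩ =
              ⟨((((⇑(σ v))^[k + 1 + 1] x0 : G.neighborSet v) : V), v),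
                ((⇑(σ v))^[k + 1 + 1] x0).2.symm⟩ := by
            apply SimpleGraph.Dart.ext
            have h0 : (σ v) ⟨(u : V), hadjvu⟩ = (⇑(σ v))^[k + 1 + 1] x0 := by
              rw [Function.iterate_succ_apply' (⇑(σ v)) (k + 1) x0, ← hu]
            exact congrArg (fun z : G.neighborSet v => ((z : V), v)) h0
          exact Rtrans hk (Rtrans hflip ⟨1, hnext⟩)
      obtain ⟨K, hK, hKx⟩ := sigfix v x0
      have hQ : ∃ k, 0 < k ∧ (⇑(σ v))^[k] x0 = x0 := ⟨K, hK, hKx⟩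
      have hn0 := Nat.find_spec hQ
      set n := Nat.find hQ with hn
      have hnpos : 0 < n := hn0.1
      have hmin : ∀ j, 1 ≤ j → j ≤ n - 1 → (((⇑(σ v))^[j] x0 : G.neighborSet v) : V) ≠ w := by
        intro j h1 h2 hcontra
        have hjn : j < n := lt_of_le_of_lt h2 (Nat.sub_lt hnpos one_pos)
        exact Nat.find_min hQ hjn ⟨h1, Subtype.ext hcontra⟩
      have h := inner (n - 1) hmin
      have hfix : (⇑(σ v))^[(n - 1) + 1] x0 = x0 := by
        rw [Nat.sub_add_cancel hnpos]
        exact hn0.2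
      have hd : (⟨((((⇑(σ v))^[(n - 1) + 1] x0 : G.neighborSet v) : V), v),
          ((⇑(σ v))^[(n - 1) + 1] x0).2.symm⟩ : G.Dart) = ⟨(w, v), hvw.symm⟩ := by
        apply SimpleGraph.Dart.ext
        rw [hfix]
      rw [hd] at h
      exact h
  have revD : ∀ (a b : V) (hab : G.Adj a b), R ⟨(a, b), hab⟩ ⟨(b, a), hab.symm⟩ :=
    fun a b hab => rev (sideCard G a b) a b hab le_rfl
  -- from a dart (a, b) we can reach any dart (b, c)
  have step2 : ∀ (a b : V) (hab : G.Adj a b) (c : V) (hbc : G.Adj b c),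
      R ⟨(a, b), hab⟩ ⟨(b, c), hbc⟩ := by
    intro a b hab c hbc
    have claim : ∀ k : ℕ,
        R ⟨(a, b), hab⟩
          ⟨((((⇑(σ b))^[k] ⟨a, hab.symm⟩ : G.neighborSet b) : V), b),
            ((⇑(σ b))^[k] ⟨a, hab.symm⟩).2.symm⟩ := by
      intro k
      induction k with
      | zero => exact Rrefl _
      | succ k ih =>
        set y : G.neighborSet b := (⇑(σ b))^[k] ⟨a, hab.symm⟩ with hy
        have h1 := revD (y : V) b y.2.symm
        have h2 : f ⟨(b, (y : V)), y.2⟩ =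
            ⟨((((⇑(σ b))^[k + 1] ⟨a, hab.symm⟩ : G.neighborSet b) : V), b),
              ((⇑(σ b))^[k + 1] ⟨a, hab.symm⟩).2.symm⟩ := by
          apply SimpleGraph.Dart.ext
          have h0 : (σ b) ⟨(y : V), y.2⟩ = (⇑(σ b))^[k + 1] ⟨a, hab.symm⟩ := by
            rw [Function.iterate_succ_apply' (⇑(σ b)) k, ← hy, Subtype.coe_eta]
          exact congrArg (fun z : G.neighborSet b => ((z : V), b)) h0
        exact Rtrans ih (Rtrans h1 ⟨1, h2⟩)
    obtain ⟨m, hm⟩ := hσ b ⟨a, hab.symm⟩ ⟨c, hbc⟩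
    have h := claim m
    have hd : (⟨((((⇑(σ b))^[m] ⟨a, hab.symm⟩ : G.neighborSet b) : V), b),
        ((⇑(σ b))^[m] ⟨a, hab.symm⟩).2.symm⟩ : G.Dart) = ⟨(c, b), hbc.symm⟩ := by
      apply SimpleGraph.Dart.ext
      rw [hm]
    rw [hd] at h
    exact Rtrans h (revD c b hbc.symm)
  -- walk along the tree
  have walkL : ∀ (b c : V) (p : G.Walk b c) (a : V) (hab : G.Adj a b)
      (e : V) (hce : G.Adj c e), R ⟨(a, b), hab⟩ ⟨(c, e), hce⟩ := by
    intro b c p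
    induction p with
    | nil => intro a hab e hbe; exact step2 a _ hab e hbe
    | cons h q ih =>
      intro a hab e hce
      exact Rtrans (step2 a _ hab _ h) (ih _ h e hce)
  rintro ⟨⟨a, b⟩, hab⟩ ⟨⟨c, e⟩, hce⟩
  obtain ⟨p⟩ := hT.isConnected.preconnected b c
  exact walkL b c p a hab e hce
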